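/- Let (P_i)_{i ∈ Fin d} and (Q_j)_{j ∈ Fin d'} be two projective measurements on ℂ^n: families of nonzero orthogonal projections with P_i P_{i'} = 0 for i ≠ i', Q_j Q_{j'} = 0 for j ≠ j', ∑_i P_i = I and ∑_j Q_j = I, where d, d' ≥ 2. Then the following are equivalent: (1) for every pair of nontrivial coarse-grainings f : Fin d → Fin a and g : Fin d' → Fin b (a, b ≥ 2), the induced pair of coarse-grained POVMs is incompatible; (2) for every nonempty proper subset S ⊆ Fin d and every nonempty proper subset T ⊆ Fin d', the matrices ∑_{i∈S} P_i and ∑_{j∈T} Q_j do not commute. -/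

import Mathlib

open Matrix Finset
open scoped ComplexOrder

noncomputable section

namespace PVMAux

variable {n : ℕ}

open scoped MatrixOrder in
/-- If two PSD matrices sum to zero, each is zero. -/
lemma psd_add_eq_zero {X Y : Matrix (Fin n) (Fin n) ℂ} (hX : X.PosSemidef)
    (hY : Y.PosSemidef) (h : X + Y = 0) : X = 0 := by
  have hq : ∀ v, star v ⬝ᵥ X *ᵥ v = 0 := by
    intro v
    have hXY : X = -Y := eq_neg_of_add_eq_zero_left h
    have h1 : star v ⬝ᵥ X *ᵥ v ≤ 0 := by
      rw [hXY, neg_mulVec, dotProduct_neg]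
      simpa using hY.dotProduct_mulVec_nonneg v
    exact le_antisymm h1 (hX.dotProduct_mulVec_nonneg v)
  set S := CFC.sqrt X with hSdef
  have hSh : Sᴴ = S := (CFC.sqrt_nonneg X).posSemidef.isHermitian
  have hSS : S * S = X := CFC.sqrt_mul_sqrt_self X hX.nonneg
  have hv : ∀ v, S *ᵥ v = 0 := by
    intro v
    have h1 : star (S *ᵥ v) ⬝ᵥ (S *ᵥ v) = 0 := by
      rw [star_mulVec, hSh, ← dotProduct_mulVec, mulVec_mulVec, hSS]
      exact hq v
    exact dotProduct_star_self_eq_zero.mp h1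
  ext i j
  have h2 : X *ᵥ Pi.single j 1 = 0 := by
    rw [← hSS, ← mulVec_mulVec, hv]
  have := congr_fun h2 i
  simpa using this

/-- Subset sums of an orthogonal idempotent family multiply as intersections. -/
lemma sum_mul_sum_inter' {d : ℕ} (P : Fin d → Matrix (Fin n) (Fin n) ℂ)
    (hidem : ∀ i, P i * P i = P i) (horth : ∀ i i', i ≠ i' → P i * P i' = 0)
    (S T : Finset (Fin d)) :
    (∑ i ∈ S, P i) * (∑ j ∈ T, P j) = ∑ i ∈ S ∩ T, P i := by
  rw [Finset.sum_mul]
  have h1 : ∀ i ∈ S, P i * (∑ j ∈ T, P j) = if i ∈ T then P i else 0 := by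
    intro i _
    rw [Finset.mul_sum]
    have : ∀ j ∈ T, P i * P j = if i = j then P i else 0 := by
      intro j _
      by_cases h : i = j
      · subst h; rw [if_pos rfl, hidem]
      · rw [if_neg h, horth _ _ h]
    rw [Finset.sum_congr rfl this, Finset.sum_ite_eq]
  rw [Finset.sum_congr rfl h1, Finset.sum_ite_mem]

lemma psd_sum' {ι : Type*} (s : Finset ι) (f : ι → Matrix (Fin n) (Fin n) ℂ)
    (h : ∀ i ∈ s, (f i).PosSemidef) : (∑ i ∈ s, f i).PosSemidef := by
  classical
  induction s using Finset.induction with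
  | empty => simpa using Matrix.PosSemidef.zero
  | insert _ _ hx ih =>
    rw [Finset.sum_insert hx]
    exact (h _ (Finset.mem_insert_self _ _)).add
      (ih fun i hi => h i (Finset.mem_insert_of_mem hi))

open scoped MatrixOrder in
/-- A PSD matrix dominated by a projection (in the sense `G + H = A` with `H` PSD)
is absorbed by the projection. -/
lemma proj_absorb' {A G H : Matrix (Fin n) (Fin n) ℂ} (hG : G.PosSemidef) (hH : H.PosSemidef)
    (hAi : A * A = A) (hAh : Aᴴ = A) (hsum : G + H = A) :
    A * G = G ∧ G * A = G := by
  set B := (1 : Matrix (Fin n) (Fin n) ℂ) - A with hBdef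
  have hBh : Bᴴ = B := by simp [hBdef, hAh]
  have hAB : A * B = 0 := by
    simp [hBdef, mul_sub, hAi]
  have hBAB : B * A * B = 0 := by
    have : A * B = 0 := hAB
    calc B * A * B = B * (A * B) := by rw [mul_assoc]
      _ = 0 := by rw [this, mul_zero]
  have hzero : (B * G * B) + (B * H * B) = 0 := by
    have h2 : B * (G + H) * B = B * G * B + B * H * B := by
      rw [mul_add, add_mul]
    rw [← h2, hsum, hBAB]
  have hBGB : B * G * B = 0 := by
    refine psd_add_eq_zero ?_ ?_ hzero
    · have := hG.conjTranspose_mul_mul_same B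
      rwa [hBh] at this
    · have := hH.conjTranspose_mul_mul_same B
      rwa [hBh] at this
  -- B * G * B = (S*B)ᴴ * (S*B) with S = sqrt G
  set S := CFC.sqrt G with hSdef
  have hSh : Sᴴ = S := (CFC.sqrt_nonneg G).posSemidef.isHermitian
  have hSS : S * S = G := CFC.sqrt_mul_sqrt_self G hG.nonneg
  have hSB : S * B = 0 := by
    have h1 : (S * B)ᴴ * (S * B) = B * G * B := by
      calc (S * B)ᴴ * (S * B) = (B * S) * (S * B) := by rw [conjTranspose_mul, hBh, hSh]
        _ = B * (S * S) * B := by rw [mul_assoc, ← mul_assoc S S B, ← mul_assoc]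
        _ = B * G * B := by rw [hSS]
    rw [hBGB] at h1
    exact conjTranspose_mul_self_eq_zero.mp h1
  have hGB : G * B = 0 := by
    rw [← hSS, mul_assoc, hSB, mul_zero]
  have hGA : G * A = G := by
    have : G * (1 - A) = 0 := hGB
    rw [mul_sub, mul_one, sub_eq_zero] at this
    exact this.symm
  refine ⟨?_, hGA⟩
  have := congrArg conjTranspose hGA
  rwa [conjTranspose_mul, hAh, hG.isHermitian] at this

end PVMAux

open PVMAux

/-- A `d`-outcome POVM on `ℂ^n`: positive semidefinite effects summing to the identity. -/
def IsPOVM {n d : ℕ} (M : Fin d → Matrix (Fin n) (Fin n) ℂ) : Prop :=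
  (∀ z, (M z).PosSemidef) ∧ ∑ z, M z = 1

/-- Coarse-graining of a `d`-outcome POVM along `f : Fin d → Fin k`. -/
def coarseGrain {n d k : ℕ} (M : Fin d → Matrix (Fin n) (Fin n) ℂ) (f : Fin d → Fin k)
    (z' : Fin k) : Matrix (Fin n) (Fin n) ℂ :=
  ∑ z ∈ Finset.univ.filter (fun z => f z = z'), M z

/-- Compatibility of a finite family of `d`-outcome POVMs: existence of a parent POVM
`G` together with classical post-processings `p`. -/
def Compatible {n m d : ℕ} (M : Fin m → Fin d → Matrix (Fin n) (Fin n) ℂ) : Prop :=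
  ∃ (L : ℕ) (G : Fin L → Matrix (Fin n) (Fin n) ℂ) (p : Fin m → Fin d → Fin L → ℝ),
    (∀ l, (G l).PosSemidef) ∧ (∑ l, G l = 1) ∧
    (∀ x z l, 0 ≤ p x z l) ∧ (∀ x l, ∑ z, p x z l = 1) ∧
    (∀ x z, M x z = ∑ l, (p x z l : ℂ) • G l)

/-- Joint measurability of two POVMs via a joint parent POVM with marginals `A` and `B`. -/
def JointlyMeasurable {n a b : ℕ} (A : Fin a → Matrix (Fin n) (Fin n) ℂ)
    (B : Fin b → Matrix (Fin n) (Fin n) ℂ) : Prop :=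
  ∃ G : Fin a → Fin b → Matrix (Fin n) (Fin n) ℂ,
    (∀ i j, (G i j).PosSemidef) ∧ (∑ i, ∑ j, G i j = 1) ∧
    (∀ i, A i = ∑ j, G i j) ∧ (∀ j, B j = ∑ i, G i j)

/-- Two projective measurements are fully incompatible w.r.t. coarse-graining iff no pair of
subset-sums of their projections commutes (Result 2 of the paper). -/
theorem fully_incompatible_iff_no_commuting_subset_sums
    {n d d' : ℕ} (hd : 2 ≤ d) (hd' : 2 ≤ d')
    (P : Fin d → Matrix (Fin n) (Fin n) ℂ)
    (Q : Fin d' → Matrix (Fin n) (Fin n) ℂ)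
    (hPne : ∀ i, P i ≠ 0) (hPherm : ∀ i, (P i).IsHermitian)
    (hPidem : ∀ i, P i * P i = P i)
    (hPorth : ∀ i i', i ≠ i' → P i * P i' = 0)
    (hPsum : ∑ i, P i = 1)
    (hQne : ∀ j, Q j ≠ 0) (hQherm : ∀ j, (Q j).IsHermitian)
    (hQidem : ∀ j, Q j * Q j = Q j)
    (hQorth : ∀ j j', j ≠ j' → Q j * Q j' = 0)
    (hQsum : ∑ j, Q j = 1) :
    (∀ a b : ℕ, 2 ≤ a → 2 ≤ b → ∀ (f : Fin d → Fin a) (g : Fin d' → Fin b),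
        (∀ z', coarseGrain P f z' ≠ 1) → (∀ z', coarseGrain Q g z' ≠ 1) →
        ¬ JointlyMeasurable (coarseGrain P f) (coarseGrain Q g)) ↔
    (∀ (S : Finset (Fin d)) (T : Finset (Fin d')),
        S.Nonempty → S ≠ Finset.univ → T.Nonempty → T ≠ Finset.univ →
        (∑ i ∈ S, P i) * (∑ j ∈ T, Q j) ≠ (∑ j ∈ T, Q j) * (∑ i ∈ S, P i)) := by
  classical
  -- basic facts about subset sums of P
  have hPSherm : ∀ S : Finset (Fin d), (∑ i ∈ S, P i)ᴴ = ∑ i ∈ S, P i := by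
    intro S
    rw [Matrix.conjTranspose_sum]
    exact Finset.sum_congr rfl fun i _ => hPherm i
  have hQSherm : ∀ T : Finset (Fin d'), (∑ j ∈ T, Q j)ᴴ = ∑ j ∈ T, Q j := by
    intro T
    rw [Matrix.conjTranspose_sum]
    exact Finset.sum_congr rfl fun j _ => hQherm j
  have hPSidem : ∀ S : Finset (Fin d), (∑ i ∈ S, P i) * (∑ i ∈ S, P i) = ∑ i ∈ S, P i := by
    intro S
    rw [sum_mul_sum_inter' P hPidem hPorth, Finset.inter_self]
  have hQSidem : ∀ T : Finset (Fin d'), (∑ j ∈ T, Q j) * (∑ j ∈ T, Q j) = ∑ j ∈ T, Q j := by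
    intro T
    rw [sum_mul_sum_inter' Q hQidem hQorth, Finset.inter_self]
  have hPSne : ∀ S : Finset (Fin d), S.Nonempty → (∑ i ∈ S, P i) ≠ 0 := by
    rintro S ⟨i, hi⟩ h0
    have h := sum_mul_sum_inter' P hPidem hPorth {i} S
    rw [h0, mul_zero] at h
    have hin : ({i} : Finset (Fin d)) ∩ S = {i} := by
      rw [Finset.inter_eq_left]; simpa using hi
    rw [hin, Finset.sum_singleton] at h
    exact hPne i h.symm
  have hQSne : ∀ T : Finset (Fin d'), T.Nonempty → (∑ j ∈ T, Q j) ≠ 0 := by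
    rintro T ⟨j, hj⟩ h0
    have h := sum_mul_sum_inter' Q hQidem hQorth {j} T
    rw [h0, mul_zero] at h
    have hin : ({j} : Finset (Fin d')) ∩ T = {j} := by
      rw [Finset.inter_eq_left]; simpa using hj
    rw [hin, Finset.sum_singleton] at h
    exact hQne j h.symm
  constructor
  · -- fully incompatible → no commuting subset sums
    intro h1 S T hSne hSu hTne hTu hcomm
    set PS := ∑ i ∈ S, P i with hPSdef
    set QT := ∑ j ∈ T, Q j with hQTdef
    set f : Fin d → Fin 2 := fun i => if i ∈ S then 0 else 1 with hfdef
    set g : Fin d' → Fin 2 := fun j => if j ∈ T then 0 else 1 with hgdef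
    have hfilt0 : Finset.univ.filter (fun z => f z = 0) = S := by
      ext z
      by_cases hz : z ∈ S <;> simp [hfdef, hz]
    have hfilt1 : Finset.univ.filter (fun z => f z = 1) = Sᶜ := by
      ext z
      by_cases hz : z ∈ S <;> simp [hfdef, hz]
    have hgilt0 : Finset.univ.filter (fun z => g z = 0) = T := by
      ext z
      by_cases hz : z ∈ T <;> simp [hgdef, hz]
    have hgilt1 : Finset.univ.filter (fun z => g z = 1) = Tᶜ := by
      ext z
      by_cases hz : z ∈ T <;> simp [hgdef, hz]
    have hsumcompl : ∑ i ∈ Sᶜ, P i = 1 - PS := by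
      have h := Finset.sum_add_sum_compl S P
      rw [hPsum] at h
      rw [← h, hPSdef]; abel
    have hsumcomplQ : ∑ j ∈ Tᶜ, Q j = 1 - QT := by
      have h := Finset.sum_add_sum_compl T Q
      rw [hQsum] at h
      rw [← h, hQTdef]; abel
    have hcg0 : coarseGrain P f 0 = PS := by rw [coarseGrain, hfilt0]
    have hcg1 : coarseGrain P f 1 = 1 - PS := by rw [coarseGrain, hfilt1, hsumcompl]
    have hch0 : coarseGrain Q g 0 = QT := by rw [coarseGrain, hgilt0]
    have hch1 : coarseGrain Q g 1 = 1 - QT := by rw [coarseGrain, hgilt1, hsumcomplQ]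
    have hScne : Sᶜ.Nonempty := by
      rw [Finset.nonempty_iff_ne_empty]
      intro h
      exact hSu ((Finset.compl_eq_empty_iff _).mp h)
    have hTcne : Tᶜ.Nonempty := by
      rw [Finset.nonempty_iff_ne_empty]
      intro h
      exact hTu ((Finset.compl_eq_empty_iff _).mp h)
    have hz2 : ∀ z' : Fin 2, z' = 0 ∨ z' = 1 := by decide
    have hPP : PS * PS = PS := by rw [hPSdef]; exact hPSidem S
    have hQQ : QT * QT = QT := by rw [hQTdef]; exact hQSidem T
    have hPh : PSᴴ = PS := by rw [hPSdef]; exact hPSherm S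
    have hQh : QTᴴ = QT := by rw [hQTdef]; exact hQSherm T
    have hfz : ∀ z' : Fin 2, coarseGrain P f z' ≠ 1 := by
      intro z'
      rcases hz2 z' with rfl | rfl
      · rw [hcg0]
        intro h
        apply hPSne Sᶜ hScne
        rw [hsumcompl, h, sub_self]
      · rw [hcg1]
        intro h
        apply hPSne S hSne
        rw [← hPSdef]
        exact sub_eq_self.mp h
    have hgz : ∀ z' : Fin 2, coarseGrain Q g z' ≠ 1 := by
      intro z'
      rcases hz2 z' with rfl | rfl
      · rw [hch0]
        intro h
        apply hQSne Tᶜ hTcne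
        rw [hsumcomplQ, h, sub_self]
      · rw [hch1]
        intro h
        apply hQSne T hTne
        rw [← hQTdef]
        exact sub_eq_self.mp h
    apply h1 2 2 le_rfl le_rfl f g hfz hgz
    have key : ∀ z w : Fin 2, Commute (coarseGrain P f z) (coarseGrain Q g w) := by
      intro z w
      rcases hz2 z with rfl | rfl <;> rcases hz2 w with rfl | rfl <;>
        simp only [hcg0, hcg1, hch0, hch1]
      · exact hcomm
      · exact (Commute.one_right PS).sub_right hcomm
      · exact (Commute.one_left QT).sub_left hcomm
      · exact (Commute.one_left (1 - QT)).sub_left ((Commute.one_right PS).sub_right hcomm)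
    have hEh : ∀ z : Fin 2, (coarseGrain P f z)ᴴ = coarseGrain P f z := by
      intro z
      rcases hz2 z with rfl | rfl
      · rw [hcg0]; exact hPh
      · rw [hcg1, Matrix.conjTranspose_sub, Matrix.conjTranspose_one, hPh]
    have hFh : ∀ w : Fin 2, (coarseGrain Q g w)ᴴ = coarseGrain Q g w := by
      intro w
      rcases hz2 w with rfl | rfl
      · rw [hch0]; exact hQh
      · rw [hch1, Matrix.conjTranspose_sub, Matrix.conjTranspose_one, hQh]
    have hEi : ∀ z : Fin 2, coarseGrain P f z * coarseGrain P f z = coarseGrain P f z := by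
      intro z
      rcases hz2 z with rfl | rfl
      · rw [hcg0]; exact hPP
      · rw [hcg1]
        have h := hPP
        calc (1 - PS) * (1 - PS) = 1 - PS - PS + PS * PS := by noncomm_ring
          _ = 1 - PS - PS + PS := by rw [h]
          _ = 1 - PS := by abel
    have hFi : ∀ w : Fin 2, coarseGrain Q g w * coarseGrain Q g w = coarseGrain Q g w := by
      intro w
      rcases hz2 w with rfl | rfl
      · rw [hch0]; exact hQQ
      · rw [hch1]
        calc (1 - QT) * (1 - QT) = 1 - QT - QT + QT * QT := by noncomm_ring
          _ = 1 - QT - QT + QT := by rw [hQQ]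
          _ = 1 - QT := by abel
    have hpsd : ∀ z w : Fin 2, (coarseGrain P f z * coarseGrain Q g w).PosSemidef := by
      intro z w
      set E := coarseGrain P f z
      set F := coarseGrain Q g w
      have hc : E * F = F * E := key z w
      have h : (E * F)ᴴ * (E * F) = E * F := by
        rw [Matrix.conjTranspose_mul, hEh z, hFh w]
        calc F * E * (E * F) = F * (E * E) * F := by
              rw [mul_assoc, ← mul_assoc E E F, ← mul_assoc]
          _ = F * E * F := by rw [hEi z]
          _ = F * (F * E) := by rw [mul_assoc, ← hc]
          _ = F * F * E := by rw [← mul_assoc]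
          _ = F * E := by rw [hFi w]
          _ = E * F := hc.symm
      rw [← h]
      exact Matrix.posSemidef_conjTranspose_mul_self _
    refine ⟨fun z w => coarseGrain P f z * coarseGrain Q g w, hpsd, ?_, ?_, ?_⟩
    · simp only [Fin.sum_univ_two, hcg0, hcg1, hch0, hch1]
      noncomm_ring
    · intro z
      simp only [Fin.sum_univ_two, hch0, hch1]
      noncomm_ring
    · intro w
      simp only [Fin.sum_univ_two, hcg0, hcg1]
      noncomm_ring
  · -- no commuting subset sums → fully incompatible
    intro h2 a b ha hb f g hfz hgz hJM
    obtain ⟨Gm, hGpsd, hGsum, hGA, hGB⟩ := hJM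
    set CA := coarseGrain P f with hCAdef
    set CB := coarseGrain Q g with hCBdef
    have hCAherm : ∀ i, (CA i)ᴴ = CA i := fun i => hPSherm _
    have hCBherm : ∀ j, (CB j)ᴴ = CB j := fun j => hQSherm _
    have hCAmul : ∀ i i', CA i * CA i' = if i = i' then CA i else 0 := by
      intro i i'
      by_cases h : i = i'
      · subst h; rw [if_pos rfl]; exact hPSidem _
      · rw [if_neg h, hCAdef]
        show coarseGrain P f i * coarseGrain P f i' = 0
        rw [coarseGrain, coarseGrain, sum_mul_sum_inter' P hPidem hPorth]
        have : Finset.univ.filter (fun z => f z = i) ∩ Finset.univ.filter (fun z => f z = i')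
            = ∅ := by
          ext z
          simp only [Finset.mem_inter, Finset.mem_filter, Finset.mem_univ, true_and,
            Finset.notMem_empty, iff_false]
          rintro ⟨h1, h2⟩; exact h (h1 ▸ h2 ▸ rfl)
        rw [this, Finset.sum_empty]
    have habsorb : ∀ i j, CA i * Gm i j = Gm i j ∧ Gm i j * CA i = Gm i j := by
      intro i j
      refine proj_absorb' (hGpsd i j) (H := ∑ j' ∈ Finset.univ.erase j, Gm i j')
        (psd_sum' _ _ fun j' _ => hGpsd i j') ?_ ?_ ?_
      · have := hCAmul i i; rwa [if_pos rfl] at this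
      · exact hCAherm i
      · rw [Finset.add_sum_erase _ _ (Finset.mem_univ j)]
        exact (hGA i).symm
    have hcomm : ∀ i j, CA i * CB j = CB j * CA i := by
      intro i j
      have hL : CA i * CB j = Gm i j := by
        rw [hGB j, Finset.mul_sum]
        rw [Finset.sum_eq_single i]
        · exact (habsorb i j).1
        · intro i' _ hne
          rw [← (habsorb i' j).1, ← mul_assoc, hCAmul, if_neg (Ne.symm hne), zero_mul]
        · intro h; exact absurd (Finset.mem_univ i) h
      have hR : CB j * CA i = Gm i j := by
        rw [hGB j, Finset.sum_mul]
        rw [Finset.sum_eq_single i]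
        · exact (habsorb i j).2
        · intro i' _ hne
          rw [← (habsorb i' j).2, mul_assoc, hCAmul, if_neg hne, mul_zero]
        · intro h; exact absurd (Finset.mem_univ i) h
      rw [hL, hR]
    set i₀ : Fin d := ⟨0, by omega⟩ with hi₀
    set j₀ : Fin d' := ⟨0, by omega⟩ with hj₀
    set S := Finset.univ.filter (fun z => f z = f i₀) with hSdef
    set T := Finset.univ.filter (fun z => g z = g j₀) with hTdef
    have hSP : ∑ i ∈ S, P i = CA (f i₀) := rfl
    have hTQ : ∑ j ∈ T, Q j = CB (g j₀) := rfl
    refine h2 S T ⟨i₀, by simp [hSdef]⟩ ?_ ⟨j₀, by simp [hTdef]⟩ ?_ ?_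
    · intro hSu
      refine hfz (f i₀) ?_
      show (∑ z ∈ Finset.univ.filter (fun z => f z = f i₀), P z) = 1
      rw [← hSdef, hSu, hPsum]
    · intro hTu
      refine hgz (g j₀) ?_
      show (∑ z ∈ Finset.univ.filter (fun z => g z = g j₀), Q z) = 1
      rw [← hTdef, hTu, hQsum]
    · rw [hSP, hTQ]
      exact hcomm _ _
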